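/- arXiv:2306.10256 — 3 statements merged into one kernel-verified Lean document; each statement's English description precedes it below -/
import Mathlib

section
/- Let Ω ⊂ ℝ² be an open, bounded, connected but not simply connected domain with boundary of class C¹, and let w ∈ C²(Ω) ∩ C¹(Ω̄) satisfy −Δw ≤ e^w pointwise in Ω, w ≥ 0 in Ω and w = 0 on ∂Ω. Let Ω* denote the interior of the closure of the union of all bounded connected components of ℝ² \ ∂Ω, and define ŵ : Ω* → ℝ by ŵ = w on Ω and ŵ = 0 on Ω* \ Ω. Then ŵ satisfies −Δŵ ≤ e^{ŵ} in Ω* in the sense of distributions: for every φ ∈ C²(Ω̄*) with φ = 0 on ∂Ω* and φ ≥ 0 in Ω*, one has −∫_{Ω*} ŵ Δφ dx ≤ ∫_{Ω*} e^{ŵ} φ dx. -/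
open MeasureTheory Metric Real Set

/-- The Euclidean Laplacian of `f : ℂ → ℝ`, identifying `ℝ²` with `ℂ`. -/
noncomputable def lap (f : ℂ → ℝ) (x : ℂ) : ℝ :=
  fderiv ℝ (fun y => fderiv ℝ f y 1) x 1 +
  fderiv ℝ (fun y => fderiv ℝ f y Complex.I) x Complex.I

/-- The squared norm of the gradient of `f : ℂ → ℝ`. -/
noncomputable def gradSq (f : ℂ → ℝ) (x : ℂ) : ℝ :=
  (fderiv ℝ f x 1) ^ 2 + (fderiv ℝ f x Complex.I) ^ 2

/-- The standard Liouville bubble `U_λ(x) = ln( (λ/(1+(λ²/8)|x|²))² )`. -/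
noncomputable def Ufun (l : ℝ) (z : ℂ) : ℝ :=
  Real.log ((l / (1 + l ^ 2 / 8 * ‖z‖ ^ 2)) ^ 2)

/-- A set is a rectifiable Jordan curve: homeomorphic image of the circle with
finite 1-dimensional Hausdorff measure. -/
def IsRectJordanCurve (s : Set ℂ) : Prop :=
  (∃ f : ↥(Metric.sphere (0 : ℂ) 1) → ℂ,
    Continuous f ∧ Function.Injective f ∧ Set.range f = s) ∧
  μH[1] s < ⊤

/-- A set is a finite union of rectifiable Jordan curves. -/
def IsFinUnionRectJordan (s : Set ℂ) : Prop :=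
  ∃ (n : ℕ) (c : Fin n → Set ℂ), (∀ i, IsRectJordanCurve (c i)) ∧ s = ⋃ i, c i

/-- A bounded open set has boundary of class `C¹`: the boundary is a finite union of
images of periodic, regular, injective `C¹` loops. -/
def IsC1Boundary (Ω : Set ℂ) : Prop :=
  ∃ (n : ℕ) (γ : Fin n → ℝ → ℂ),
    (∀ i, ContDiff ℝ 1 (γ i)) ∧
    (∀ i, Function.Periodic (γ i) 1) ∧
    (∀ i t, deriv (γ i) t ≠ 0) ∧
    (∀ i, Set.InjOn (γ i) (Set.Ico (0 : ℝ) 1)) ∧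
    frontier Ω = ⋃ i, Set.range (γ i)

/-- `Φ` is a conformal map from the closed unit disk onto `closure ω`: continuous on the
closed disk, holomorphic and injective on the open disk, mapping the open disk onto `ω`. -/
def IsConformalOnto (Φ : ℂ → ℂ) (ω : Set ℂ) : Prop :=
  ContinuousOn Φ (closure (Metric.ball (0 : ℂ) 1)) ∧
  Φ '' closure (Metric.ball (0 : ℂ) 1) = closure ω ∧
  DifferentiableOn ℂ Φ (Metric.ball (0 : ℂ) 1) ∧
  Set.InjOn Φ (Metric.ball (0 : ℂ) 1) ∧
  Φ '' Metric.ball (0 : ℂ) 1 = ω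



noncomputable def eisBump (a b : ℝ) : ℝ → ℝ := fun s => max 0 ((s - a) * (b - s))

lemma eisBump_cont (a b : ℝ) : Continuous (eisBump a b) := by
  unfold eisBump; fun_prop

lemma eisBump_nonneg (a b s : ℝ) : 0 ≤ eisBump a b s := le_max_left _ _

lemma eisBump_zero_left {a b s : ℝ} (hab : a < b) (h : s ≤ a) : eisBump a b s = 0 := by
  have : (s - a) * (b - s) ≤ 0 :=
    mul_nonpos_of_nonpos_of_nonneg (by linarith) (by linarith)
  simp [eisBump, max_eq_left this]

lemma eisBump_zero_right {a b s : ℝ} (hab : a < b) (h : b ≤ s) : eisBump a b s = 0 := by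
  have : (s - a) * (b - s) ≤ 0 :=
    mul_nonpos_of_nonneg_of_nonpos (by linarith) (by linarith)
  simp [eisBump, max_eq_left this]

lemma eisBump_pos {a b s : ℝ} (h : s ∈ Set.Ioo a b) : 0 < eisBump a b s := by
  have : 0 < (s - a) * (b - s) := mul_pos (by linarith [h.1]) (by linarith [h.2])
  simp [eisBump, max_eq_right this.le, this]

noncomputable def eisIntN (a b : ℝ) : ℝ := ∫ t in a..b, eisBump a b t

lemma eisIntN_pos {a b : ℝ} (hab : a < b) : 0 < eisIntN a b :=
  intervalIntegral.intervalIntegral_pos_of_pos_on ((eisBump_cont a b).intervalIntegrable _ _)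
    (fun x hx => eisBump_pos hx) hab

noncomputable def eisA (a b : ℝ) : ℝ → ℝ := fun s => ∫ t in a..s, eisBump a b t

lemma eisA_hasDerivAt (a b s : ℝ) : HasDerivAt (eisA a b) (eisBump a b s) s :=
  intervalIntegral.integral_hasDerivAt_right ((eisBump_cont a b).intervalIntegrable _ _)
    (eisBump_cont a b).stronglyMeasurable.stronglyMeasurableAtFilter
    (eisBump_cont a b).continuousAt

lemma eisA_zero {a b s : ℝ} (hab : a < b) (h : s ≤ a) : eisA a b s = 0 := by
  rw [eisA, ← intervalIntegral.integral_zero (a := a) (b := s) (μ := volume)]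
  apply intervalIntegral.integral_congr
  intro t ht
  rw [Set.uIcc_of_ge h] at ht
  exact eisBump_zero_left hab (ht.2.trans_eq rfl)

lemma eisA_full {a b s : ℝ} (hab : a < b) (h : b ≤ s) : eisA a b s = eisIntN a b := by
  have h2 : ∫ t in b..s, eisBump a b t = 0 := by
    rw [← intervalIntegral.integral_zero (a := b) (b := s) (μ := volume)]
    apply intervalIntegral.integral_congr
    intro t ht
    rw [Set.uIcc_of_le h] at ht
    exact eisBump_zero_right hab ht.1
  have := intervalIntegral.integral_add_adjacent_intervals (μ := volume)
    (a := a) (b := b) (c := s) ((eisBump_cont a b).intervalIntegrable _ _)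
    ((eisBump_cont a b).intervalIntegrable _ _)
  rw [eisA, ← this, h2, add_zero, eisIntN]

lemma eisA_mono (a b : ℝ) : Monotone (eisA a b) := by
  intro s s' h
  have := intervalIntegral.integral_add_adjacent_intervals (μ := volume)
    (a := a) (b := s) (c := s') ((eisBump_cont a b).intervalIntegrable _ _)
    ((eisBump_cont a b).intervalIntegrable _ _)
  rw [eisA, eisA, ← this]
  have : 0 ≤ ∫ t in s..s', eisBump a b t :=
    intervalIntegral.integral_nonneg h (fun t _ => eisBump_nonneg a b t)
  linarith

lemma eisA_nonneg {a b : ℝ} (hab : a < b) (s : ℝ) : 0 ≤ eisA a b s := by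
  rcases le_total s a with h | h
  · rw [eisA_zero hab h]
  · rw [← eisA_zero hab (le_refl a)]; exact eisA_mono a b h

lemma eisA_le {a b : ℝ} (hab : a < b) (s : ℝ) : eisA a b s ≤ eisIntN a b := by
  rcases le_total s b with h | h
  · rw [← eisA_full hab (le_refl b)]; exact eisA_mono a b h
  · rw [eisA_full hab h]

noncomputable def eisG1 (a b : ℝ) : ℝ → ℝ := fun s => eisA a b s / eisIntN a b

lemma eisG1_hasDerivAt (a b s : ℝ) :
    HasDerivAt (eisG1 a b) (eisBump a b s / eisIntN a b) s :=
  (eisA_hasDerivAt a b s).div_const _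

lemma eisG1_nonneg {a b : ℝ} (hab : a < b) (s : ℝ) : 0 ≤ eisG1 a b s :=
  div_nonneg (eisA_nonneg hab s) (eisIntN_pos hab).le

lemma eisG1_le_one {a b : ℝ} (hab : a < b) (s : ℝ) : eisG1 a b s ≤ 1 :=
  (div_le_one (eisIntN_pos hab)).2 (eisA_le hab s)

lemma eisG1_zero {a b s : ℝ} (hab : a < b) (h : s ≤ a) : eisG1 a b s = 0 := by
  simp [eisG1, eisA_zero hab h]

lemma eisG1_one {a b s : ℝ} (hab : a < b) (h : b ≤ s) : eisG1 a b s = 1 := by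
  rw [eisG1, eisA_full hab h, div_self (eisIntN_pos hab).ne']

lemma eisG1_cont (a b : ℝ) : Continuous (eisG1 a b) :=
  continuous_iff_continuousAt.2 fun s => (eisG1_hasDerivAt a b s).continuousAt

noncomputable def eisG (a b : ℝ) : ℝ → ℝ := fun s => ∫ t in (0:ℝ)..s, eisG1 a b t

lemma eisG_hasDerivAt (a b s : ℝ) : HasDerivAt (eisG a b) (eisG1 a b s) s :=
  intervalIntegral.integral_hasDerivAt_right ((eisG1_cont a b).intervalIntegrable _ _)
    (eisG1_cont a b).stronglyMeasurable.stronglyMeasurableAtFilter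
    (eisG1_cont a b).continuousAt

lemma eisG_zero {a b s : ℝ} (ha : 0 < a) (hab : a < b) (h : s ≤ a) : eisG a b s = 0 := by
  have hz : (∫ t in (0:ℝ)..s, eisG1 a b t) = ∫ t in (0:ℝ)..s, (0:ℝ) := by
    apply intervalIntegral.integral_congr
    intro t ht
    have : t ≤ a := by
      rcases le_total (0:ℝ) s with h0 | h0
      · rw [Set.uIcc_of_le h0] at ht; exact ht.2.trans h
      · rw [Set.uIcc_of_ge h0] at ht; exact ht.2.trans ha.le
    exact eisG1_zero hab this
  simp [eisG, hz]

lemma eisG_nonneg {a b : ℝ} (hab : a < b) {s : ℝ} (h : 0 ≤ s) : 0 ≤ eisG a b s :=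
  intervalIntegral.integral_nonneg h (fun t _ => eisG1_nonneg hab t)

lemma eisG_le {a b : ℝ} (hab : a < b) {s : ℝ} (h : 0 ≤ s) : eisG a b s ≤ s := by
  have : eisG a b s ≤ ∫ t in (0:ℝ)..s, (1:ℝ) := by
    apply intervalIntegral.integral_mono_on h ((eisG1_cont a b).intervalIntegrable _ _)
      (intervalIntegrable_const)
    exact fun t _ => eisG1_le_one hab t
  simpa using this

lemma eisG_ge {a b : ℝ} (ha : 0 < a) (hab : a < b) {s : ℝ} (h : b ≤ s) :
    s - b ≤ eisG a b s := by
  have h0b : (0:ℝ) ≤ b := by linarith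
  have hsplit := intervalIntegral.integral_add_adjacent_intervals (μ := volume)
    (a := (0:ℝ)) (b := b) (c := s) ((eisG1_cont a b).intervalIntegrable _ _)
    ((eisG1_cont a b).intervalIntegrable _ _)
  have h1 : 0 ≤ ∫ t in (0:ℝ)..b, eisG1 a b t :=
    intervalIntegral.integral_nonneg h0b (fun t _ => eisG1_nonneg hab t)
  have h2 : ∫ t in b..s, eisG1 a b t = s - b := by
    have : ∫ t in b..s, eisG1 a b t = ∫ t in b..s, (1:ℝ) := by
      apply intervalIntegral.integral_congr
      intro t ht
      rw [Set.uIcc_of_le h] at ht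
      exact eisG1_one hab ht.1
    simpa using this
  rw [eisG, ← hsplit, h2]
  linarith

lemma eisG_contDiff {a b : ℝ} : ContDiff ℝ 2 (eisG a b) := by
  have hd : deriv (eisG a b) = eisG1 a b := funext fun s => (eisG_hasDerivAt a b s).deriv
  have hd1 : deriv (eisG1 a b) = fun s => eisBump a b s / eisIntN a b :=
    funext fun s => (eisG1_hasDerivAt a b s).deriv
  have h1 : ContDiff ℝ 1 (eisG1 a b) := by
    have e1 : ((0:WithTop ℕ∞) + 1) = 1 := by norm_num
    rw [← e1, contDiff_succ_iff_deriv]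
    refine ⟨fun s => (eisG1_hasDerivAt a b s).differentiableAt, by simp, ?_⟩
    rw [hd1, contDiff_zero]
    exact (eisBump_cont a b).div_const _
  have e2 : ((1:WithTop ℕ∞) + 1) = 2 := by norm_num
  rw [← e2, contDiff_succ_iff_deriv]
  exact ⟨fun s => (eisG_hasDerivAt a b s).differentiableAt, by simp, hd ▸ h1⟩


noncomputable def eisPd (v : ℂ) (f : ℂ → ℝ) (z : ℂ) : ℝ := fderiv ℝ f z v

lemma eisLap_eq (f : ℂ → ℝ) (z : ℂ) :
    lap f z = eisPd 1 (eisPd 1 f) z + eisPd Complex.I (eisPd Complex.I f) z := rfl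

lemma eisPd_contDiff {f : ℂ → ℝ} (v : ℂ) (hf : ContDiff ℝ 2 f) :
    ContDiff ℝ 1 (eisPd v f) :=
  (hf.fderiv_right (by norm_num)).clm_apply contDiff_const

lemma eisPd_cont {f : ℂ → ℝ} (v : ℂ) (hf : ContDiff ℝ 1 f) :
    Continuous (eisPd v f) :=
  (hf.continuous_fderiv one_ne_zero).clm_apply continuous_const

lemma eisSliceH {f : ℂ → ℝ} (hf : Differentiable ℝ f) (y x : ℝ) :
    HasDerivAt (fun t : ℝ => f (t + y * Complex.I)) (eisPd 1 f (x + y * Complex.I)) x := by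
  have hL : HasDerivAt (fun t : ℝ => (t : ℂ) + y * Complex.I) 1 x := by
    simpa using (Complex.ofRealCLM.hasFDerivAt (x := x)).hasDerivAt.add_const (y * Complex.I)
  have := ((hf _).hasFDerivAt).comp_hasDerivAt x hL
  exact this

lemma eisSliceV {f : ℂ → ℝ} (hf : Differentiable ℝ f) (x y : ℝ) :
    HasDerivAt (fun t : ℝ => f (x + t * Complex.I))
      (eisPd Complex.I f (x + y * Complex.I)) y := by
  have hL : HasDerivAt (fun t : ℝ => (x : ℂ) + t * Complex.I) Complex.I y := by
    have h1 : HasDerivAt (fun t : ℝ => (t : ℂ)) 1 y :=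
      (Complex.ofRealCLM.hasFDerivAt (x := y)).hasDerivAt
    simpa using (h1.mul_const Complex.I).const_add (x : ℂ)
  have := ((hf _).hasFDerivAt).comp_hasDerivAt y hL
  exact this

lemma eisPd_eq_zero_of_zero_on {f : ℂ → ℝ} {U : Set ℂ} (hU : IsOpen U)
    (h0 : ∀ z ∈ U, f z = 0) {v : ℂ} {z : ℂ} (hz : z ∈ U) : eisPd v f z = 0 := by
  have : f =ᶠ[nhds z] (fun _ => (0:ℝ)) := Filter.eventuallyEq_of_mem (hU.mem_nhds hz) h0
  rw [eisPd, this.fderiv_eq, fderiv_fun_const]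
  simp

lemma eisPd2_eq_zero {f : ℂ → ℝ} {v v' : ℂ} {z : ℂ} (hz : z ∉ tsupport f) :
    eisPd v' (eisPd v f) z = 0 := by
  have hU : IsOpen (tsupport f)ᶜ := (isClosed_tsupport f).isOpen_compl
  have h0 : ∀ y ∈ (tsupport f)ᶜ, f y = 0 := fun y hy => image_eq_zero_of_notMem_tsupport hy
  exact eisPd_eq_zero_of_zero_on hU
    (fun y hy => eisPd_eq_zero_of_zero_on hU h0 hy) hz

lemma eisLap_zero {f : ℂ → ℝ} {z : ℂ} (hz : z ∉ tsupport f) : lap f z = 0 := by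
  rw [eisLap_eq, eisPd2_eq_zero hz, eisPd2_eq_zero hz, add_zero]

/-- 1D integration by parts twice, for compactly supported `u`. -/
lemma eisIBP {u v u' v' u'' v'' : ℝ → ℝ} (R : ℝ)
    (hu : ∀ x, HasDerivAt u (u' x) x) (hu' : ∀ x, HasDerivAt u' (u'' x) x)
    (hv : ∀ x, HasDerivAt v (v' x) x) (hv' : ∀ x, HasDerivAt v' (v'' x) x)
    (hcu'' : Continuous u'') (hcv'' : Continuous v'')
    (h0 : ∀ x, R ≤ |x| → u x = 0) (h0' : ∀ x, R ≤ |x| → u' x = 0) :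
    ∫ x : ℝ, u x * v'' x = ∫ x : ℝ, u'' x * v x := by
  have hcu : Continuous u := continuous_iff_continuousAt.2 fun x => (hu x).continuousAt
  have hcu' : Continuous u' := continuous_iff_continuousAt.2 fun x => (hu' x).continuousAt
  have hcv : Continuous v := continuous_iff_continuousAt.2 fun x => (hv x).continuousAt
  have hcv' : Continuous v' := continuous_iff_continuousAt.2 fun x => (hv' x).continuousAt
  set a : ℝ := -(|R| + 1) with ha
  set b : ℝ := |R| + 1 with hb
  have hRa : ∀ x : ℝ, x ≤ a ∨ b ≤ x → R ≤ |x| := by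
    intro x hx
    rcases hx with hx | hx
    · have h1 : -x ≤ |x| := neg_le_abs x
      have h2 : R ≤ |R| := le_abs_self R
      simp only [ha, hb] at hx
      linarith
    · have h1 : x ≤ |x| := le_abs_self x
      have h2 : R ≤ |R| := le_abs_self R
      simp only [hb] at hx
      linarith
  have hu0 : ∀ x : ℝ, x ≤ a ∨ b ≤ x → u x = 0 := fun x hx => h0 x (hRa x hx)
  have hu0' : ∀ x : ℝ, x ≤ a ∨ b ≤ x → u' x = 0 := fun x hx => h0' x (hRa x hx)
  have hsupp1 : Function.support (fun x => u x * v'' x) ⊆ Set.Ioc a b := by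
    intro x hx
    by_contra hxn
    rcases (not_and_or.1 (fun h => hxn ⟨h.1, h.2⟩) : ¬ a < x ∨ ¬ x ≤ b) with h | h
    · exact hx (by simp [hu0 x (Or.inl (not_lt.1 h))])
    · exact hx (by simp [hu0 x (Or.inr (not_le.1 h).le)])
  have hu''0 : ∀ x : ℝ, x < a ∨ b < x → u'' x = 0 := by
    intro x hx
    have hnbhd : u' =ᶠ[nhds x] (fun _ => (0:ℝ)) := by
      rcases hx with hx | hx
      · filter_upwards [eventually_lt_nhds hx] with t ht using hu0' t (Or.inl ht.le)
      · filter_upwards [eventually_gt_nhds hx] with t ht using hu0' t (Or.inr ht.le)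
    have h1 : HasDerivAt u' (0:ℝ) x :=
      (hasDerivAt_const x (0:ℝ)).congr_of_eventuallyEq hnbhd
    exact (hu' x).unique h1
  have hsupp2 : Function.support (fun x => u'' x * v x) ⊆ Set.Ioc (a-1) (b+1) := by
    intro x hx
    by_contra hxn
    rcases (not_and_or.1 (fun h => hxn ⟨h.1, h.2⟩) : ¬ a - 1 < x ∨ ¬ x ≤ b + 1) with h | h
    · exact hx (by simp [hu''0 x (Or.inl (by linarith [not_lt.1 h]))])
    · exact hx (by simp [hu''0 x (Or.inr (by linarith [not_le.1 h]))])
  have hsupp1' : Function.support (fun x => u x * v'' x) ⊆ Set.Ioc (a-1) (b+1) := by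
    refine hsupp1.trans ?_
    intro x hx
    exact ⟨by linarith [hx.1], by linarith [hx.2]⟩
  have hab : a - 1 ≤ b + 1 := by
    have : (0:ℝ) ≤ |R| := abs_nonneg R
    simp only [ha, hb]; linarith
  have e1 : ∫ x : ℝ, u x * v'' x = ∫ x in (a-1)..(b+1), u x * v'' x :=
    (intervalIntegral.integral_eq_integral_of_support_subset hsupp1').symm
  have e2 : ∫ x : ℝ, u'' x * v x = ∫ x in (a-1)..(b+1), u'' x * v x :=
    (intervalIntegral.integral_eq_integral_of_support_subset hsupp2).symm
  have hab' : a - 1 ≤ b + 1 := hab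
  have hI1 : ∫ x in (a-1)..(b+1), (u' x * v' x + u x * v'' x) =
      u (b+1) * v' (b+1) - u (a-1) * v' (a-1) :=
    intervalIntegral.integral_deriv_mul_eq_sub (fun x _ => hu x) (fun x _ => hv' x)
      (hcu'.intervalIntegrable _ _) (hcv''.intervalIntegrable _ _)
  have hI2 : ∫ x in (a-1)..(b+1), (u'' x * v x + u' x * v' x) =
      u' (b+1) * v (b+1) - u' (a-1) * v (a-1) :=
    intervalIntegral.integral_deriv_mul_eq_sub (fun x _ => hu' x) (fun x _ => hv x)
      (hcu''.intervalIntegrable _ _) (hcv'.intervalIntegrable _ _)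
  rw [hu0 (b+1) (Or.inr (by linarith)), hu0 (a-1) (Or.inl (by linarith))] at hI1
  rw [hu0' (b+1) (Or.inr (by linarith)), hu0' (a-1) (Or.inl (by linarith))] at hI2
  rw [intervalIntegral.integral_add (f := fun x => u' x * v' x) (g := fun x => u x * v'' x) ((hcu'.mul hcv').intervalIntegrable _ _)
    ((hcu.mul hcv'').intervalIntegrable _ _)] at hI1
  rw [intervalIntegral.integral_add (f := fun x => u'' x * v x) (g := fun x => u' x * v' x) ((hcu''.mul hcv).intervalIntegrable _ _)
    ((hcu'.mul hcv').intervalIntegrable _ _)] at hI2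
  simp only [zero_mul, sub_zero, sub_self] at hI1 hI2
  rw [e1, e2]
  linarith

lemma eisEquivSymm (p : ℝ × ℝ) :
    (Complex.measurableEquivRealProd.symm p : ℂ) = p.1 + p.2 * Complex.I := by
  simp [Complex.measurableEquivRealProd, Complex.equivRealProd]
  exact (Complex.mk_eq_add_mul_I _ _)

lemma eisTransfer (g : ℂ → ℝ) :
    ∫ p : ℝ × ℝ, g (p.1 + p.2 * Complex.I) = ∫ z : ℂ, g z := by
  have h := (Complex.volume_preserving_equiv_real_prod.symm
    Complex.measurableEquivRealProd).integral_comp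
    Complex.measurableEquivRealProd.symm.measurableEmbedding g
  rw [← h]
  congr 1
  funext p
  rw [eisEquivSymm]

lemma eisIntegrableProd {g : ℂ → ℝ} (hg : Integrable g) :
    Integrable (fun p : ℝ × ℝ => g (p.1 + p.2 * Complex.I)) := by
  have h := (Complex.volume_preserving_equiv_real_prod.symm
    Complex.measurableEquivRealProd).integrable_comp_emb
    Complex.measurableEquivRealProd.symm.measurableEmbedding (g := g)
  have := h.2 hg
  exact this.congr (Filter.Eventually.of_forall fun p => by
    rw [Function.comp_apply, eisEquivSymm])

lemma eisFubX {g : ℂ → ℝ} (hg : Integrable g) :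
    ∫ z : ℂ, g z = ∫ x : ℝ, ∫ y : ℝ, g (x + y * Complex.I) := by
  rw [← eisTransfer g]
  have h := MeasureTheory.integral_prod (μ := (volume : Measure ℝ))
    (ν := (volume : Measure ℝ)) (fun p : ℝ × ℝ => g (p.1 + p.2 * Complex.I))
    (by rw [← Measure.volume_eq_prod]; exact eisIntegrableProd hg)
  rw [← Measure.volume_eq_prod] at h
  exact h

lemma eisFubY {g : ℂ → ℝ} (hg : Integrable g) :
    ∫ z : ℂ, g z = ∫ y : ℝ, ∫ x : ℝ, g (x + y * Complex.I) := by
  rw [eisFubX hg]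
  have h : Integrable (Function.uncurry fun (x y : ℝ) => g (↑x + ↑y * Complex.I))
      ((volume : Measure ℝ).prod volume) := by
    have h2 := eisIntegrableProd hg
    rw [Measure.volume_eq_prod] at h2
    exact h2
  exact MeasureTheory.integral_integral_swap h

/-- Green's identity on the plane for compactly supported C² function. -/
lemma eisGreen {f φ : ℂ → ℝ} (hf : ContDiff ℝ 2 f) (hfc : HasCompactSupport f)
    (hφ : ContDiff ℝ 2 φ) :
    ∫ z : ℂ, f z * lap φ z = ∫ z : ℂ, lap f z * φ z := by
  -- radius
  obtain ⟨R0, hR0⟩ := hfc.isBounded.subset_closedBall 0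
  set R : ℝ := |R0| + 1 with hRdef
  have hfz : ∀ z : ℂ, R ≤ ‖z‖ → z ∉ tsupport f := by
    intro z hz hmem
    have := hR0 hmem
    rw [Metric.mem_closedBall, Complex.dist_eq, sub_zero] at this
    have : ‖z‖ ≤ |R0| := this.trans (le_abs_self R0)
    linarith
  have habs_re : ∀ x y : ℝ, |x| ≤ ‖(x:ℂ) + y * Complex.I‖ := by
    intro x y
    have : ((x : ℂ) + y * Complex.I).re = x := by simp
    calc |x| = |((x:ℂ) + y * Complex.I).re| := by rw [this]
    _ ≤ ‖_‖ := Complex.abs_re_le_norm _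
  have habs_im : ∀ x y : ℝ, |y| ≤ ‖(x:ℂ) + y * Complex.I‖ := by
    intro x y
    have : ((x : ℂ) + y * Complex.I).im = y := by simp
    calc |y| = |((x:ℂ) + y * Complex.I).im| := by rw [this]
    _ ≤ ‖_‖ := Complex.abs_im_le_norm _
  -- continuity of everything
  have hcontf : Continuous f := hf.continuous
  have hcontφ : Continuous φ := hφ.continuous
  have hpdf1 : ContDiff ℝ 1 (eisPd 1 f) := eisPd_contDiff 1 hf
  have hpdfI : ContDiff ℝ 1 (eisPd Complex.I f) := eisPd_contDiff Complex.I hf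
  have hpdφ1 : ContDiff ℝ 1 (eisPd 1 φ) := eisPd_contDiff 1 hφ
  have hpdφI : ContDiff ℝ 1 (eisPd Complex.I φ) := eisPd_contDiff Complex.I hφ
  have hc11f : Continuous (eisPd 1 (eisPd 1 f)) := eisPd_cont 1 hpdf1
  have hcIIf : Continuous (eisPd Complex.I (eisPd Complex.I f)) := eisPd_cont _ hpdfI
  have hc11φ : Continuous (eisPd 1 (eisPd 1 φ)) := eisPd_cont 1 hpdφ1
  have hcIIφ : Continuous (eisPd Complex.I (eisPd Complex.I φ)) := eisPd_cont _ hpdφI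
  -- vanishing of f and its derivatives off tsupport
  have hf0 : ∀ z ∉ tsupport f, f z = 0 := fun z hz => image_eq_zero_of_notMem_tsupport hz
  have hpd0 : ∀ (v : ℂ), ∀ z ∉ tsupport f, eisPd v f z = 0 := by
    intro v z hz
    exact eisPd_eq_zero_of_zero_on (isClosed_tsupport f).isOpen_compl
      (fun y hy => hf0 y hy) hz
  -- integrable helpers
  have hint : ∀ g : ℂ → ℝ, Continuous g → (∀ z ∉ tsupport f, g z = 0) → Integrable g := by
    intro g hg h0
    exact hg.integrable_of_hasCompactSupport (HasCompactSupport.intro hfc h0)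
  have hI1 : Integrable (fun z => f z * eisPd 1 (eisPd 1 φ) z) :=
    hint _ (hcontf.mul hc11φ) (fun z hz => by rw [hf0 z hz, zero_mul])
  have hI2 : Integrable (fun z => f z * eisPd Complex.I (eisPd Complex.I φ) z) :=
    hint _ (hcontf.mul hcIIφ) (fun z hz => by rw [hf0 z hz, zero_mul])
  have hJ1 : Integrable (fun z => eisPd 1 (eisPd 1 f) z * φ z) :=
    hint _ (hc11f.mul hcontφ) (fun z hz => by rw [eisPd2_eq_zero hz, zero_mul])
  have hJ2 : Integrable (fun z => eisPd Complex.I (eisPd Complex.I f) z * φ z) :=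
    hint _ (hcIIf.mul hcontφ) (fun z hz => by rw [eisPd2_eq_zero hz, zero_mul])
  -- horizontal IBP
  have key1 : ∀ y : ℝ,
      (∫ x : ℝ, f (x + y * Complex.I) * eisPd 1 (eisPd 1 φ) (x + y * Complex.I))
      = ∫ x : ℝ, eisPd 1 (eisPd 1 f) (x + y * Complex.I) * φ (x + y * Complex.I) := by
    intro y
    refine eisIBP R
      (fun x => eisSliceH (hf.differentiable (by norm_num)) y x)
      (fun x => eisSliceH (hpdf1.differentiable one_ne_zero) y x)
      (fun x => eisSliceH (hφ.differentiable (by norm_num)) y x)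
      (fun x => eisSliceH (hpdφ1.differentiable one_ne_zero) y x)
      (hc11f.comp (Complex.continuous_ofReal.add continuous_const))
      (hc11φ.comp (Complex.continuous_ofReal.add continuous_const)) ?_ ?_
    · intro x hx
      exact hf0 _ (hfz _ (hx.trans (habs_re x y)))
    · intro x hx
      exact hpd0 1 _ (hfz _ (hx.trans (habs_re x y)))
  -- vertical IBP
  have key2 : ∀ x : ℝ,
      (∫ y : ℝ, f (x + y * Complex.I) *
        eisPd Complex.I (eisPd Complex.I φ) (x + y * Complex.I))
      = ∫ y : ℝ, eisPd Complex.I (eisPd Complex.I f) (x + y * Complex.I) *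
          φ (x + y * Complex.I) := by
    intro x
    refine eisIBP R
      (fun y => eisSliceV (hf.differentiable (by norm_num)) x y)
      (fun y => eisSliceV (hpdfI.differentiable one_ne_zero) x y)
      (fun y => eisSliceV (hφ.differentiable (by norm_num)) x y)
      (fun y => eisSliceV (hpdφI.differentiable one_ne_zero) x y)
      (hcIIf.comp (continuous_const.add (Complex.continuous_ofReal.mul continuous_const)))
      (hcIIφ.comp (continuous_const.add (Complex.continuous_ofReal.mul continuous_const))) ?_ ?_
    · intro y hy
      exact hf0 _ (hfz _ (hy.trans (habs_im x y)))
    · intro y hy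
      exact hpd0 Complex.I _ (hfz _ (hy.trans (habs_im x y)))
  -- assemble
  have split1 : ∫ z : ℂ, f z * lap φ z =
      (∫ z : ℂ, f z * eisPd 1 (eisPd 1 φ) z) +
      ∫ z : ℂ, f z * eisPd Complex.I (eisPd Complex.I φ) z := by
    rw [← integral_add hI1 hI2]
    congr 1
    funext z
    rw [eisLap_eq]
    ring
  have split2 : ∫ z : ℂ, lap f z * φ z =
      (∫ z : ℂ, eisPd 1 (eisPd 1 f) z * φ z) +
      ∫ z : ℂ, eisPd Complex.I (eisPd Complex.I f) z * φ z := by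
    rw [← integral_add hJ1 hJ2]
    congr 1
    funext z
    rw [eisLap_eq]
    ring
  have t1 : ∫ z : ℂ, f z * eisPd 1 (eisPd 1 φ) z =
      ∫ z : ℂ, eisPd 1 (eisPd 1 f) z * φ z := by
    rw [eisFubY hI1, eisFubY hJ1]
    congr 1
    funext y
    exact key1 y
  have t2 : ∫ z : ℂ, f z * eisPd Complex.I (eisPd Complex.I φ) z =
      ∫ z : ℂ, eisPd Complex.I (eisPd Complex.I f) z * φ z := by
    rw [eisFubX hI2, eisFubX hJ2]
    congr 1
    funext x
    exact key2 x
  rw [split1, split2, t1, t2]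

lemma eisLap_cont {f : ℂ → ℝ} (hf : ContDiff ℝ 2 f) : Continuous (lap f) :=
  (eisPd_cont 1 (eisPd_contDiff 1 hf)).add
    (eisPd_cont Complex.I (eisPd_contDiff Complex.I hf))


lemma eisLapComp {w : ℂ → ℝ} {Ω : Set ℂ} (hΩ : IsOpen Ω) (hw : ContDiffOn ℝ 2 w Ω)
    {G G₁ G₂ : ℝ → ℝ} (hG1 : ∀ s, HasDerivAt G (G₁ s) s)
    (hG2 : ∀ s, HasDerivAt G₁ (G₂ s) s)
    {f : ℂ → ℝ} (hfw : ∀ z ∈ Ω, f z = G (w z)) {x : ℂ} (hx : x ∈ Ω) :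
    lap f x = G₂ (w x) * gradSq w x + G₁ (w x) * lap w x := by
  have hdw : ∀ z ∈ Ω, HasFDerivAt w (fderiv ℝ w z) z := fun z hz =>
    (((hw.differentiableOn (by norm_num)) z hz).differentiableAt
      (hΩ.mem_nhds hz)).hasFDerivAt
  have hFf : ∀ z ∈ Ω, HasFDerivAt f (G₁ (w z) • fderiv ℝ w z) z := by
    intro z hz
    have hcomp := (hG1 (w z)).comp_hasFDerivAt z (hdw z hz)
    apply hcomp.congr_of_eventuallyEq
    filter_upwards [hΩ.mem_nhds hz] with y hy
    exact hfw y hy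
  have hpdf : ∀ (v : ℂ), ∀ z ∈ Ω, eisPd v f z = G₁ (w z) * eisPd v w z := by
    intro v z hz
    rw [eisPd, (hFf z hz).fderiv]
    simp [eisPd]
  have hpdw_cd : ∀ v : ℂ, ContDiffOn ℝ 1 (eisPd v w) Ω :=
    fun v => (hw.fderiv_of_isOpen hΩ (by norm_num)).clm_apply contDiffOn_const
  have key : ∀ v : ℂ, eisPd v (eisPd v f) x
      = G₂ (w x) * (eisPd v w x * eisPd v w x) + G₁ (w x) * eisPd v (eisPd v w) x := by
    intro v
    have hdpdw : HasFDerivAt (eisPd v w) (fderiv ℝ (eisPd v w) x) x :=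
      ((((hpdw_cd v).differentiableOn one_ne_zero) x hx).differentiableAt
        (hΩ.mem_nhds hx)).hasFDerivAt
    have hG1w : HasFDerivAt (fun z => G₁ (w z)) (G₂ (w x) • fderiv ℝ w x) x :=
      (hG2 (w x)).comp_hasFDerivAt x (hdw x hx)
    have hprod : HasFDerivAt (fun z => G₁ (w z) * eisPd v w z)
        (G₁ (w x) • fderiv ℝ (eisPd v w) x + eisPd v w x • (G₂ (w x) • fderiv ℝ w x)) x :=
      hG1w.mul hdpdw
    have heq : (eisPd v f) =ᶠ[nhds x] fun z => G₁ (w z) * eisPd v w z := by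
      filter_upwards [hΩ.mem_nhds hx] with y hy
      exact hpdf v y hy
    have : eisPd v (eisPd v f) x = fderiv ℝ (fun z => G₁ (w z) * eisPd v w z) x v := by
      rw [eisPd, heq.fderiv_eq]
    rw [this, hprod.fderiv]
    simp [eisPd]
    ring
  rw [eisLap_eq f, key 1, key Complex.I, eisLap_eq w, gradSq]
  have e1 : eisPd 1 w x = fderiv ℝ w x 1 := rfl
  have e2 : eisPd Complex.I w x = fderiv ℝ w x Complex.I := rfl
  rw [e1, e2]
  ring

lemma eisComplBall (R : ℝ) : IsPreconnected ((Metric.closedBall (0:ℂ) R)ᶜ) := by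
  rcases lt_or_ge R 0 with hR | hR
  · have : Metric.closedBall (0:ℂ) R = ∅ := Metric.closedBall_eq_empty.2 hR
    rw [this, Set.compl_empty]
    exact isPreconnected_univ
  · have hrank : 1 < Module.rank ℝ ℂ := by rw [Complex.rank_real_complex]; norm_num
    have hsph : IsPreconnected (Metric.sphere (0:ℂ) 1) :=
      (isConnected_sphere hrank 0 zero_le_one).isPreconnected
    have hprod : IsPreconnected ((Set.Ioi R) ×ˢ (Metric.sphere (0:ℂ) 1)) :=
      isPreconnected_Ioi.prod hsph
    have himg : IsPreconnected ((fun p : ℝ × ℂ => p.1 • p.2) ''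
        ((Set.Ioi R) ×ˢ (Metric.sphere (0:ℂ) 1))) :=
      hprod.image _ (continuous_fst.smul continuous_snd).continuousOn
    have heq : (fun p : ℝ × ℂ => p.1 • p.2) '' ((Set.Ioi R) ×ˢ (Metric.sphere (0:ℂ) 1))
        = (Metric.closedBall (0:ℂ) R)ᶜ := by
      ext z
      simp only [Set.mem_image, Set.mem_prod, Set.mem_Ioi, Metric.mem_sphere,
        Set.mem_compl_iff, Metric.mem_closedBall, dist_zero_right, not_le]
      constructor
      · rintro ⟨⟨t, y⟩, ⟨ht, hy⟩, rfl⟩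
        have h0t : 0 < t := lt_of_le_of_lt hR ht
        simp only at hy ht ⊢
        rw [norm_smul, Real.norm_eq_abs, abs_of_pos h0t, hy, mul_one]
        exact ht
      · intro hz
        have hz0 : z ≠ 0 := by
          intro h
          rw [h] at hz
          simp at hz
          linarith
        refine ⟨⟨‖z‖, ‖z‖⁻¹ • z⟩, ⟨hz, ?_⟩, ?_⟩
        · simp only [norm_smul, norm_inv, norm_norm]
          exact inv_mul_cancel₀ (norm_ne_zero_iff.2 hz0)
        · simp only [smul_smul]
          rw [mul_inv_cancel₀ (norm_ne_zero_iff.2 hz0), one_smul]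
    rw [← heq]
    exact himg


/-- the extension `ŵ` of `w` by zero to the "filled" domain `Ω*` is a
distributional subsolution of the Liouville equation. -/
theorem extension_is_distributional_subsolution
    (Ω : Set ℂ) (hΩopen : IsOpen Ω) (hΩbdd : Bornology.IsBounded Ω)
    (hΩconn : IsConnected Ω) (hΩnsc : ¬ SimplyConnectedSpace ↥Ω)
    (hΩC1 : IsC1Boundary Ω)
    (w : ℂ → ℝ) (hw2 : ContDiffOn ℝ 2 w Ω) (hw1 : ContDiffOn ℝ 1 w (closure Ω))
    (hsub : ∀ x ∈ Ω, -lap w x ≤ Real.exp (w x))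
    (hwge : ∀ x ∈ Ω, 0 ≤ w x)
    (hwc : ∀ x ∈ frontier Ω, w x = 0)
    (Ωstar : Set ℂ)
    (hΩstar : Ωstar = interior (closure (⋃₀ {C : Set ℂ | Bornology.IsBounded C ∧
      ∃ x ∈ (frontier Ω)ᶜ, C = connectedComponentIn (frontier Ω)ᶜ x})))
    (what : ℂ → ℝ) (hwhat_in : ∀ x ∈ Ω, what x = w x)
    (hwhat_out : ∀ x ∉ Ω, what x = 0) :
    ∀ φ : ℂ → ℝ, ContDiff ℝ 2 φ → (∀ x ∈ frontier Ωstar, φ x = 0) →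
      (∀ x ∈ Ωstar, 0 ≤ φ x) →
      -(∫ x in Ωstar, what x * lap φ x) ≤ ∫ x in Ωstar, Real.exp (what x) * φ x := by
  intro φ hφ hφfr hφpos
  -- basic topological facts
  have hΩmeas : MeasurableSet Ω := hΩopen.measurableSet
  have hfr : frontier Ω = closure Ω \ Ω := hΩopen.frontier_eq
  have hΩfrc : Ω ⊆ (frontier Ω)ᶜ := by
    intro x hx hmem
    rw [hfr] at hmem
    exact hmem.2 hx
  obtain ⟨x₀, hx₀⟩ := hΩconn.nonempty
  have hcomp : connectedComponentIn (frontier Ω)ᶜ x₀ = Ω := by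
    apply Set.Subset.antisymm
    · set C := connectedComponentIn (frontier Ω)ᶜ x₀ with hC
      have hCpre : IsPreconnected C := isPreconnected_connectedComponentIn
      by_contra hnot
      obtain ⟨z, hzC, hzΩ⟩ := Set.not_subset.1 hnot
      have hcc := hCpre Ω (closure Ω)ᶜ hΩopen isClosed_closure.isOpen_compl ?_ ?_ ?_
      · obtain ⟨y, _, hyΩ, hyc⟩ := hcc
        exact hyc (subset_closure hyΩ)
      · intro u huC
        by_cases huΩ : u ∈ Ω
        · exact Or.inl huΩ
        · refine Or.inr fun hucl => ?_
          exact (connectedComponentIn_subset _ _ huC) (hfr ▸ ⟨hucl, huΩ⟩)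
      · exact ⟨x₀, mem_connectedComponentIn (hΩfrc hx₀), hx₀⟩
      · exact ⟨z, hzC, fun hcl => (connectedComponentIn_subset _ _ hzC) (hfr ▸ ⟨hcl, hzΩ⟩)⟩
    · exact hΩconn.isPreconnected.subset_connectedComponentIn hx₀ hΩfrc
  have hΩsub : Ω ⊆ Ωstar := by
    rw [hΩstar]
    apply hΩopen.subset_interior_iff.2
    refine Set.Subset.trans ?_ subset_closure
    exact Set.subset_sUnion_of_mem ⟨hΩbdd, x₀, hΩfrc hx₀, hcomp.symm⟩
  -- boundedness of Ωstar
  obtain ⟨R, hRcl⟩ := hΩbdd.closure.subset_closedBall (0:ℂ)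
  have hstar_bdd : Bornology.IsBounded Ωstar := by
    have hsub2 : ⋃₀ {C : Set ℂ | Bornology.IsBounded C ∧ ∃ x ∈ (frontier Ω)ᶜ,
        C = connectedComponentIn (frontier Ω)ᶜ x} ⊆ Metric.closedBall 0 R := by
      rintro z ⟨C, ⟨hCb, x, hxF, rfl⟩, hzC⟩
      by_contra hzB
      have hcompl_sub : (Metric.closedBall (0:ℂ) R)ᶜ ⊆ (frontier Ω)ᶜ :=
        Set.compl_subset_compl.2 (frontier_subset_closure.trans hRcl)
      have h1 : (Metric.closedBall (0:ℂ) R)ᶜ ⊆ connectedComponentIn (frontier Ω)ᶜ z :=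
        (eisComplBall R).subset_connectedComponentIn hzB hcompl_sub
      rw [← connectedComponentIn_eq hzC] at h1
      obtain ⟨R', hR'⟩ := hCb.subset_closedBall (0:ℂ)
      set r : ℝ := max (max R R') 0 + 1 with hr
      have hrR : R < r := by
        have h1 := le_max_left R R'
        have h2 := le_max_left (max R R') 0
        rw [hr]; linarith
      have hrR' : R' < r := by
        have h1 := le_max_right R R'
        have h2 := le_max_left (max R R') 0
        rw [hr]; linarith
      have hrpos : 0 < r := by
        have h2 := le_max_right (max R R') 0
        rw [hr]; linarith
      have hr1 : ((r:ℝ):ℂ) ∈ (Metric.closedBall (0:ℂ) R)ᶜ := by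
        simp only [Set.mem_compl_iff, Metric.mem_closedBall, Complex.dist_eq, sub_zero,
          Complex.norm_real, Real.norm_eq_abs, not_le]
        rw [abs_of_pos hrpos]
        exact hrR
      have := hR' (h1 hr1)
      simp only [Metric.mem_closedBall, Complex.dist_eq, sub_zero, Complex.norm_real, Real.norm_eq_abs] at this
      rw [abs_of_pos hrpos] at this
      linarith
    rw [hΩstar]
    exact Metric.isBounded_closedBall.subset
      (interior_subset.trans (closure_minimal hsub2 Metric.isClosed_closedBall))
  have hclΩ : IsCompact (closure Ω) := hΩbdd.isCompact_closure
  have hstar_meas : MeasurableSet Ωstar := by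
    rw [hΩstar]; exact isOpen_interior.measurableSet
  have hstar_fin : volume Ωstar < ⊤ := hstar_bdd.measure_lt_top
  have hΩfin : volume Ω < ⊤ := hΩbdd.measure_lt_top
  have hφpos' : ∀ x ∈ Ω, 0 ≤ φ x := fun x hx => hφpos x (hΩsub hx)
  -- bounds
  obtain ⟨Mw, hMw⟩ := hclΩ.exists_bound_of_continuousOn hw1.continuousOn
  have hwhat_nonneg : ∀ x, 0 ≤ what x := by
    intro x
    by_cases hx : x ∈ Ω
    · rw [hwhat_in x hx]; exact hwge x hx
    · rw [hwhat_out x hx]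
  have hwhat_bd : ∀ x, what x ≤ max Mw 0 := by
    intro x
    by_cases hx : x ∈ Ω
    · rw [hwhat_in x hx]
      exact le_trans (le_trans (le_abs_self _) (hMw x (subset_closure hx)))
        (le_max_left _ _)
    · rw [hwhat_out x hx]; exact le_max_right _ _
  have hφc : Continuous φ := hφ.continuous
  have hlapφ : Continuous (lap φ) := eisLap_cont hφ
  obtain ⟨Mψ, hMψ⟩ := hstar_bdd.isCompact_closure.exists_bound_of_continuousOn
    hlapφ.continuousOn
  obtain ⟨Mφ, hMφ⟩ := hstar_bdd.isCompact_closure.exists_bound_of_continuousOn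
    hφc.continuousOn
  -- measurability of what
  have hwhat_ind : what = Set.indicator Ω w := by
    funext x
    by_cases hx : x ∈ Ω
    · rw [hwhat_in x hx, Set.indicator_of_mem hx]
    · rw [hwhat_out x hx, Set.indicator_of_notMem hx]
  have hwhat_asm : AEStronglyMeasurable what volume := by
    rw [hwhat_ind]
    exact (aestronglyMeasurable_indicator_iff hΩmeas).2
      (hw2.continuousOn.aestronglyMeasurable hΩmeas)
  -- integrability of the exponential term
  have hexp_asm : AEStronglyMeasurable (fun x => Real.exp (what x) * φ x) volume :=
    (Real.continuous_exp.comp_aestronglyMeasurable hwhat_asm).mul hφc.aestronglyMeasurable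
  have hexp_bd : ∀ x ∈ Ωstar, ‖Real.exp (what x) * φ x‖ ≤ Real.exp (max Mw 0) * |Mφ| := by
    intro x hx
    rw [norm_mul, Real.norm_eq_abs, Real.norm_eq_abs, Real.abs_exp]
    apply mul_le_mul
    · exact Real.exp_le_exp.2 (hwhat_bd x)
    · exact le_trans (le_of_eq (Real.norm_eq_abs _).symm)
        (le_trans (hMφ x (subset_closure hx)) (le_abs_self _))
    · exact abs_nonneg _
    · positivity
  have hExpInt : IntegrableOn (fun x => Real.exp (what x) * φ x) Ω volume := by
    apply Measure.integrableOn_of_bounded hΩfin.ne hexp_asm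
    rw [ae_restrict_iff' hΩmeas]
    exact Filter.Eventually.of_forall fun x hx => hexp_bd x (hΩsub hx)
  have hExpInt2 : IntegrableOn (fun x => Real.exp (what x) * φ x) (Ωstar \ Ω) volume := by
    apply Measure.integrableOn_of_bounded ((measure_mono Set.diff_subset).trans_lt hstar_fin).ne
      hexp_asm
    rw [ae_restrict_iff' (hstar_meas.diff hΩmeas)]
    exact Filter.Eventually.of_forall fun x hx => hexp_bd x hx.1
  -- the cutoff family
  set aseq : ℕ → ℝ := fun n => 1 / (2 * ((n:ℝ) + 1)) with haseq
  set bseq : ℕ → ℝ := fun n => 1 / ((n:ℝ) + 1) with hbseq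
  have hapos : ∀ n, 0 < aseq n := fun n => by positivity
  have hab : ∀ n, aseq n < bseq n := by
    intro n
    rw [haseq, hbseq]
    simp only
    rw [div_lt_div_iff₀ (by positivity) (by positivity)]
    nlinarith [Nat.cast_nonneg (α := ℝ) n]
  set fn : ℕ → ℂ → ℝ := fun n z => eisG (aseq n) (bseq n) (what z) with hfndef
  set Kn : ℕ → Set ℂ := fun n => closure Ω ∩ w ⁻¹' (Set.Ici (aseq n)) with hKndef
  have hKnclosed : ∀ n, IsClosed (Kn n) :=
    fun n => hw1.continuousOn.preimage_isClosed_of_isClosed isClosed_closure isClosed_Ici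
  have hKncomp : ∀ n, IsCompact (Kn n) :=
    fun n => hclΩ.of_isClosed_subset (hKnclosed n) Set.inter_subset_left
  have hKnΩ : ∀ n, Kn n ⊆ Ω := by
    rintro n x ⟨hxcl, hxw⟩
    by_contra hxΩ
    have hxf : x ∈ frontier Ω := hfr ▸ ⟨hxcl, hxΩ⟩
    have h0 := hwc x hxf
    have h1 : aseq n ≤ w x := hxw
    have := hapos n
    rw [h0] at h1
    linarith
  have hfn0 : ∀ n, ∀ z ∉ Kn n, fn n z = 0 := by
    intro n z hz
    by_cases hzΩ : z ∈ Ω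
    · have h1 : ¬ (aseq n ≤ w z) := fun h => hz ⟨subset_closure hzΩ, h⟩
      rw [hfndef]
      simp only
      rw [hwhat_in z hzΩ]
      exact eisG_zero (hapos n) (hab n) (not_le.1 h1).le
    · rw [hfndef]
      simp only
      rw [hwhat_out z hzΩ]
      exact eisG_zero (hapos n) (hab n) (hapos n).le
  have hfnC2 : ∀ n, ContDiff ℝ 2 (fn n) := by
    intro n
    rw [contDiff_iff_contDiffAt]
    intro z
    by_cases hzΩ : z ∈ Ω
    · have h1 : ContDiffAt ℝ 2 (fun y => eisG (aseq n) (bseq n) (w y)) z :=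
        (eisG_contDiff.contDiffAt).comp z (hw2.contDiffAt (hΩopen.mem_nhds hzΩ))
      apply h1.congr_of_eventuallyEq
      filter_upwards [hΩopen.mem_nhds hzΩ] with y hy
      rw [hfndef]
      simp only
      rw [hwhat_in y hy]
    · have hzK : z ∉ Kn n := fun h => hzΩ (hKnΩ n h)
      have hzo : (Kn n)ᶜ ∈ nhds z := ((hKnclosed n).isOpen_compl).mem_nhds hzK
      apply (contDiffAt_const (c := (0:ℝ))).congr_of_eventuallyEq
      filter_upwards [hzo] with y hy
      exact hfn0 n y hy
  have hfnsupp : ∀ n, HasCompactSupport (fn n) :=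
    fun n => HasCompactSupport.intro (hKncomp n) (hfn0 n)
  have hfncont : ∀ n, Continuous (fn n) := fun n => (hfnC2 n).continuous
  have hfn_tsupp : ∀ n, tsupport (fn n) ⊆ Kn n :=
    fun n => closure_minimal (Function.support_subset_iff'.2 (hfn0 n)) (hKnclosed n)
  -- lower bound for the Laplacian of fn on Ω
  have hlap_lb : ∀ n, ∀ z ∈ Ω, -(Real.exp (w z)) ≤ lap (fn n) z := by
    intro n z hz
    have hcompz := eisLapComp hΩopen hw2 (eisG_hasDerivAt (aseq n) (bseq n))
      (eisG1_hasDerivAt (aseq n) (bseq n)) (f := fn n)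
      (fun y hy => by rw [hfndef]; simp only; rw [hwhat_in y hy]) hz
    rw [hcompz]
    have h1 : 0 ≤ eisBump (aseq n) (bseq n) (w z) / eisIntN (aseq n) (bseq n) :=
      div_nonneg (eisBump_nonneg _ _ _) (eisIntN_pos (hab n)).le
    have h2 : 0 ≤ gradSq w z := add_nonneg (sq_nonneg _) (sq_nonneg _)
    have h3 : 0 ≤ eisG1 (aseq n) (bseq n) (w z) := eisG1_nonneg (hab n) _
    have h4 : eisG1 (aseq n) (bseq n) (w z) ≤ 1 := eisG1_le_one (hab n) _
    have h5 : -Real.exp (w z) ≤ lap w z := by linarith [hsub z hz]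
    have h6 : 0 < Real.exp (w z) := Real.exp_pos _
    nlinarith [mul_nonneg h1 h2]
  -- per-n inequality
  have key_n : ∀ n, -(∫ x in Ωstar, fn n x * lap φ x) ≤
      ∫ x in Ω, Real.exp (what x) * φ x := by
    intro n
    have hgreen := eisGreen (hfnC2 n) (hfnsupp n) hφ
    have hset : ∫ x in Ωstar, fn n x * lap φ x = ∫ z, fn n z * lap φ z :=
      setIntegral_eq_integral_of_forall_compl_eq_zero (fun x hx => by
        rw [hfn0 n x (fun h => hx (hΩsub (hKnΩ n h))), zero_mul])
    have hlapfn_cont : Continuous (lap (fn n)) := eisLap_cont (hfnC2 n)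
    have hJ : Integrable (fun z => lap (fn n) z * φ z) :=
      (hlapfn_cont.mul hφc).integrable_of_hasCompactSupport
        (HasCompactSupport.intro (hKncomp n) (fun x hx => by
          show lap (fn n) x * φ x = 0
          rw [eisLap_zero (fun h => hx (hfn_tsupp n h)), zero_mul]))
    have hInd : Integrable (Set.indicator Ω (fun x => Real.exp (what x) * φ x)) :=
      (integrable_indicator_iff hΩmeas).2 hExpInt
    have hpos : ∀ z, 0 ≤ lap (fn n) z * φ z +
        Set.indicator Ω (fun x => Real.exp (what x) * φ x) z := by
      intro z
      by_cases hz : z ∈ Ω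
      · rw [Set.indicator_of_mem hz]
        have h1 := hlap_lb n z hz
        have h2 := hφpos' z hz
        have h3 : Real.exp (what z) = Real.exp (w z) := by rw [hwhat_in z hz]
        rw [h3]
        nlinarith
      · rw [Set.indicator_of_notMem hz]
        have hzt : z ∉ tsupport (fn n) := fun h => hz (hKnΩ n (hfn_tsupp n h))
        rw [eisLap_zero hzt, zero_mul, add_zero]
    have h0 : 0 ≤ ∫ z, (lap (fn n) z * φ z +
        Set.indicator Ω (fun x => Real.exp (what x) * φ x) z) :=
      integral_nonneg hpos
    rw [integral_add hJ hInd, integral_indicator hΩmeas] at h0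
    rw [hset, hgreen]
    linarith
  -- dominated convergence
  have hdct : Filter.Tendsto (fun n => ∫ x in Ωstar, fn n x * lap φ x) Filter.atTop
      (nhds (∫ x in Ωstar, what x * lap φ x)) := by
    apply tendsto_integral_of_dominated_convergence
      (bound := fun _ => (max Mw 0) * |Mψ|)
    · exact fun n => ((hfncont n).mul hlapφ).aestronglyMeasurable
    · exact integrableOn_const hstar_fin.ne
    · intro n
      rw [ae_restrict_iff' hstar_meas]
      apply Filter.Eventually.of_forall
      intro x hx
      rw [norm_mul, Real.norm_eq_abs, Real.norm_eq_abs]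
      apply mul_le_mul
      · rw [abs_of_nonneg (eisG_nonneg (hab n) (hwhat_nonneg x))]
        exact le_trans (eisG_le (hab n) (hwhat_nonneg x)) (hwhat_bd x)
      · exact le_trans (le_of_eq (Real.norm_eq_abs _).symm)
          (le_trans (hMψ x (subset_closure hx)) (le_abs_self _))
      · exact abs_nonneg _
      · exact le_max_right Mw 0
    · apply Filter.Eventually.of_forall
      intro x
      apply Filter.Tendsto.mul_const
      rcases eq_or_lt_of_le (hwhat_nonneg x) with h0 | h0
      · have hz : ∀ n, fn n x = 0 := fun n =>
          eisG_zero (hapos n) (hab n) (by rw [← h0]; exact (hapos n).le)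
        rw [hfndef]
        simp only
        rw [← h0]
        have : (fun n => eisG (aseq n) (bseq n) 0) = fun _ => (0:ℝ) := by
          funext n
          have := hz n
          rw [hfndef] at this
          simp only at this
          rw [← h0] at this
          exact this
        rw [this]
        exact tendsto_const_nhds
      · have hbto : Filter.Tendsto bseq Filter.atTop (nhds 0) := by
          rw [hbseq]
          exact tendsto_one_div_add_atTop_nhds_zero_nat
        apply tendsto_of_tendsto_of_tendsto_of_le_of_le'
          (g := fun n => what x - bseq n) (h := fun _ => what x)
        · have := tendsto_const_nhds (x := what x) (f := Filter.atTop (α := ℕ)) |>.sub hbto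
          simpa using this
        · exact tendsto_const_nhds
        · filter_upwards [hbto.eventually_lt_const h0] with n hn
          exact eisG_ge (hapos n) (hab n) hn.le
        · exact Filter.Eventually.of_forall fun n => eisG_le (hab n) (hwhat_nonneg x)
  -- pass to the limit
  have hfinal1 : -(∫ x in Ωstar, what x * lap φ x) ≤ ∫ x in Ω, Real.exp (what x) * φ x :=
    le_of_tendsto hdct.neg (Filter.Eventually.of_forall key_n)
  -- compare right-hand sides
  have hsplit : ∫ x in Ωstar, Real.exp (what x) * φ x
      = (∫ x in Ω, Real.exp (what x) * φ x) +
        ∫ x in Ωstar \ Ω, Real.exp (what x) * φ x := by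
    rw [← setIntegral_union disjoint_sdiff_self_right (hstar_meas.diff hΩmeas)
      hExpInt hExpInt2, Set.union_diff_cancel hΩsub]
  have hpos2 : 0 ≤ ∫ x in Ωstar \ Ω, Real.exp (what x) * φ x :=
    setIntegral_nonneg (hstar_meas.diff hΩmeas)
      (fun x hx => mul_nonneg (Real.exp_pos _).le (hφpos x hx.1))
  linarith
end

section
/- The function ψ : ℝ² → ℝ defined by ψ(x) = (8 − |x|²)/(8 + |x|²) is smooth and satisfies Δψ(x) + e^{U_1(x)} ψ(x) = 0 for every x ∈ ℝ²; moreover ψ > 0 on the open disk B_{√8} = {x : |x| < √8} and ψ(x) = 0 for every x with |x| = √8. -/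
open MeasureTheory Metric Real Set

lemma Qpos (z : ℂ) : (0:ℝ) < 8 + Complex.normSq z := by
  have := Complex.normSq_nonneg z; linarith

lemma Qne (z : ℂ) : (8 + Complex.normSq z) ≠ 0 := (Qpos z).ne'

lemma hinv {f : ℂ → ℝ} {F : ℂ →L[ℝ] ℝ} {x : ℂ} (hf : HasFDerivAt f F x) (h0 : f x ≠ 0) :
    HasFDerivAt (fun z => (f z)⁻¹) ((-(f x ^ 2)⁻¹) • F) x :=
  (hasDerivAt_inv h0).comp_hasFDerivAt x hf

lemma hdiv {f g : ℂ → ℝ} {F G : ℂ →L[ℝ] ℝ} {x : ℂ} (hf : HasFDerivAt f F x)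
    (hg : HasFDerivAt g G x) (h0 : g x ≠ 0) :
    HasFDerivAt (fun z => f z / g z)
      ((g x)⁻¹ • F + (-(f x) * (g x ^ 2)⁻¹) • G) x := by
  have h := hf.mul (hinv hg h0)
  have : (fun z => f z / g z) = fun z => f z * (g z)⁻¹ := by
    funext z; rw [div_eq_mul_inv]
  rw [this]
  refine h.congr_fderiv ?_
  ext z
  simp [ContinuousLinearMap.smul_apply]
  ring

lemma hns (x : ℂ) : HasFDerivAt Complex.normSq
    ((2*x.re) • (Complex.reCLM : ℂ →L[ℝ] ℝ) + (2*x.im) • (Complex.imCLM : ℂ →L[ℝ] ℝ)) x := by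
  have hre : HasFDerivAt (fun z : ℂ => z.re) (Complex.reCLM : ℂ →L[ℝ] ℝ) x :=
    Complex.reCLM.hasFDerivAt
  have him : HasFDerivAt (fun z : ℂ => z.im) (Complex.imCLM : ℂ →L[ℝ] ℝ) x :=
    Complex.imCLM.hasFDerivAt
  have h := (hre.mul hre).add (him.mul him)
  have : Complex.normSq = fun z : ℂ => z.re * z.re + z.im * z.im := by
    funext z; exact Complex.normSq_apply z
  rw [this]
  refine h.congr_fderiv ?_
  ext z
  simp [ContinuousLinearMap.smul_apply]
  ring

lemma hψd (x : ℂ) : HasFDerivAt (fun z : ℂ => (8 - Complex.normSq z)/(8 + Complex.normSq z))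
    ((-32*x.re/(8+Complex.normSq x)^2) • (Complex.reCLM : ℂ →L[ℝ] ℝ)
      + (-32*x.im/(8+Complex.normSq x)^2) • (Complex.imCLM : ℂ →L[ℝ] ℝ)) x := by
  have hnum : HasFDerivAt (fun z : ℂ => 8 - Complex.normSq z)
      ((0:ℂ →L[ℝ] ℝ) - ((2*x.re) • Complex.reCLM + (2*x.im) • Complex.imCLM)) x :=
    (hasFDerivAt_const (8:ℝ) x).sub (hns x)
  have hden : HasFDerivAt (fun z : ℂ => 8 + Complex.normSq z)
      ((0:ℂ →L[ℝ] ℝ) + ((2*x.re) • Complex.reCLM + (2*x.im) • Complex.imCLM)) x :=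
    (hasFDerivAt_const (8:ℝ) x).add (hns x)
  have h := hdiv hnum hden (Qne x)
  convert h using 1
  ext z
  simp [ContinuousLinearMap.smul_apply]
  field_simp [Qne x]
  ring

/-- the function `ψ(x) = (8-|x|²)/(8+|x|²)` is a smooth entire solution of
`Δψ + e^{U₁}ψ = 0`, positive on `B_{√8}` and vanishing on `∂B_{√8}`. -/
theorem radial_eigenfunction
    (ψ : ℂ → ℝ)
    (hψ : ∀ x : ℂ, ψ x = (8 - ‖x‖ ^ 2) / (8 + ‖x‖ ^ 2)) :
    ContDiff ℝ (⊤ : ℕ∞) ψ ∧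
    (∀ x : ℂ, lap ψ x + Real.exp (Ufun 1 x) * ψ x = 0) ∧
    (∀ x ∈ Metric.ball (0 : ℂ) (Real.sqrt 8), 0 < ψ x) ∧
    (∀ x : ℂ, ‖x‖ = Real.sqrt 8 → ψ x = 0) := by
  have hψfun : ψ = fun z : ℂ => (8 - Complex.normSq z) / (8 + Complex.normSq z) := by
    funext z; rw [hψ z, Complex.sq_norm]
  have hnscd : ContDiff ℝ (⊤ : ℕ∞) Complex.normSq := by
    have : Complex.normSq = fun z : ℂ => z.re * z.re + z.im * z.im := by
      funext z; exact Complex.normSq_apply z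
    rw [this]
    exact (Complex.reCLM.contDiff.mul Complex.reCLM.contDiff).add
      (Complex.imCLM.contDiff.mul Complex.imCLM.contDiff)
  refine ⟨?_, ?_, ?_, ?_⟩
  · rw [hψfun]
    exact (contDiff_const.sub hnscd).div (contDiff_const.add hnscd) Qne
  · intro x
    -- first derivatives
    have e1 : (fun y => fderiv ℝ ψ y 1) = fun y => -32*y.re/(8+Complex.normSq y)^2 := by
      funext y
      rw [hψfun, (hψd y).fderiv]
      simp
    have e2 : (fun y => fderiv ℝ ψ y Complex.I)
        = fun y => -32*y.im/(8+Complex.normSq y)^2 := by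
      funext y
      rw [hψfun, (hψd y).fderiv]
      simp
    -- second derivatives
    have hsq : ∀ x : ℂ, HasFDerivAt (fun y : ℂ => (8+Complex.normSq y)^2)
        (((8+Complex.normSq x)) • ((0:ℂ →L[ℝ] ℝ) + ((2*x.re) • Complex.reCLM + (2*x.im) • Complex.imCLM))
          + ((8+Complex.normSq x)) • ((0:ℂ →L[ℝ] ℝ) + ((2*x.re) • Complex.reCLM + (2*x.im) • Complex.imCLM))) x := by
      intro x
      have hden : HasFDerivAt (fun z : ℂ => 8 + Complex.normSq z)
          ((0:ℂ →L[ℝ] ℝ) + ((2*x.re) • Complex.reCLM + (2*x.im) • Complex.imCLM)) x :=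
        (hasFDerivAt_const (8:ℝ) x).add (hns x)
      have h := hden.mul hden
      have heq : (fun y : ℂ => (8+Complex.normSq y)^2)
          = fun y : ℂ => (8+Complex.normSq y) * (8+Complex.normSq y) := by
        funext y; ring
      rw [heq]; exact h
    have hc : HasFDerivAt (fun y : ℂ => -32*y.re/(8+Complex.normSq y)^2) _ x :=
      hdiv (Complex.reCLM.hasFDerivAt.const_mul (-32)) (hsq x) (pow_ne_zero 2 (Qne x))
    have hd : HasFDerivAt (fun y : ℂ => -32*y.im/(8+Complex.normSq y)^2) _ x :=
      hdiv (Complex.imCLM.hasFDerivAt.const_mul (-32)) (hsq x) (pow_ne_zero 2 (Qne x))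
    have hv1 : fderiv ℝ (fun y => fderiv ℝ ψ y 1) x 1
        = ((8+Complex.normSq x)^2)⁻¹ * (-32)
          + (-(-32*x.re) * (((8+Complex.normSq x)^2)^2)⁻¹) * (2*(8+Complex.normSq x)*(2*x.re)) := by
      rw [e1, hc.fderiv]
      simp
      ring
    have hv2 : fderiv ℝ (fun y => fderiv ℝ ψ y Complex.I) x Complex.I
        = ((8+Complex.normSq x)^2)⁻¹ * (-32)
          + (-(-32*x.im) * (((8+Complex.normSq x)^2)^2)⁻¹) * (2*(8+Complex.normSq x)*(2*x.im)) := by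
      rw [e2, hd.fderiv]
      simp
      ring
    have hexp : Real.exp (Ufun 1 x) = (1 / (1 + Complex.normSq x / 8))^2 := by
      rw [Ufun]
      rw [Real.exp_log (by positivity)]
      rw [Complex.sq_norm]
      norm_num
      ring
    have hre2 : x.re * x.re + x.im * x.im = Complex.normSq x := (Complex.normSq_apply x).symm
    rw [lap, hv1, hv2, hexp]
    simp only [hψfun]
    have hQ := Qne x
    have hQ8 : (1 + Complex.normSq x / 8) ≠ 0 := by
      have := Complex.normSq_nonneg x; positivity
    rw [← hre2] at hQ hQ8 ⊢
    field_simp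
    ring
  · intro x hx
    rw [hψ x]
    simp only [Metric.mem_ball, dist_zero_right] at hx
    have h8 : ‖x‖ ^ 2 < 8 := by
      have : ‖x‖ < Real.sqrt 8 := hx
      nlinarith [Real.sq_sqrt (by norm_num : (8:ℝ) ≥ 0), norm_nonneg x,
        Real.sqrt_nonneg 8]
    exact div_pos (by linarith) (by positivity)
  · intro x hx
    rw [hψ x, hx, Real.sq_sqrt (by norm_num : (0:ℝ) ≤ 8)]
    simp
end

section
/- Let Φ : B̄₁ → ℂ be continuous on the closed unit disk, holomorphic and injective on the open unit disk B₁, and suppose that the derivative Φ′ extends continuously to B̄₁ with |Φ′| constant on the unit circle ∂B₁. Then Φ is affine: there exist a ∈ ℂ, δ > 0 and θ ∈ ℝ such that Φ(z) = a + δ e^{iθ} z for all z ∈ B̄₁. -/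
open MeasureTheory Metric Real Set
open Filter Topology

open Filter Topology in
/-- An injective holomorphic function on the unit ball has nonvanishing derivative. -/
lemma deriv_ne_zero_of_injOn_aux18 {Φ : ℂ → ℂ}
    (hΦhol : DifferentiableOn ℂ Φ (Metric.ball (0 : ℂ) 1))
    (hΦinj : Set.InjOn Φ (Metric.ball (0 : ℂ) 1))
    {z₀ : ℂ} (hz₀ : z₀ ∈ Metric.ball (0 : ℂ) 1) : deriv Φ z₀ ≠ 0 := by
  intro hd
  have hball : Metric.ball (0:ℂ) 1 ∈ 𝓝 z₀ := isOpen_ball.mem_nhds hz₀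
  set F : ℂ → ℂ := fun z => Φ z - Φ z₀ with hFdef
  have hFan : AnalyticAt ℂ F z₀ :=
    ((hΦhol.analyticOnNhd isOpen_ball) z₀ hz₀).sub analyticAt_const
  -- F is not eventually zero near z₀
  have hnot : ¬ ∀ᶠ z in 𝓝 z₀, F z = 0 := by
    intro h
    have h2 : ∀ᶠ z in 𝓝 z₀, Φ z = Φ z₀ ∧ z ∈ Metric.ball (0:ℂ) 1 := by
      filter_upwards [h, hball] with z h1 h2
      exact ⟨sub_eq_zero.mp h1, h2⟩
    obtain ⟨ε, hε, hεall⟩ := Metric.eventually_nhds_iff.mp h2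
    have hmem : dist (z₀ + (ε/2 : ℝ)) z₀ < ε := by
      rw [dist_eq_norm]
      simp only [add_sub_cancel_left, Complex.norm_real, Real.norm_eq_abs]
      rw [abs_of_pos (by linarith)]
      linarith
    obtain ⟨he1, he2⟩ := hεall hmem
    have hz0' : Φ z₀ = Φ z₀ ∧ z₀ ∈ Metric.ball (0:ℂ) 1 :=
      hεall (by simpa using hε)
    have heq : z₀ + ((ε/2 : ℝ) : ℂ) = z₀ := hΦinj he2 hz0'.2 he1
    have : ((ε/2 : ℝ) : ℂ) = 0 := by linear_combination heq
    simp only [Complex.ofReal_eq_zero] at this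
    linarith
  -- the order of F at z₀ is a finite natural number
  have hne : analyticOrderAt F z₀ ≠ ⊤ := by
    rw [ne_eq, analyticOrderAt_eq_top]; exact hnot
  lift analyticOrderAt F z₀ to ℕ using hne with n hn
  obtain ⟨G, hGan, hGne, hGeq⟩ := (hFan.analyticOrderAt_eq_natCast (n := n)).mp hn.symm
  have hF0 : F z₀ = 0 := sub_self _
  have hn0 : n ≠ 0 := by
    rintro rfl
    have := hGeq.self_of_nhds
    simp only [hF0, pow_zero, one_smul, sub_self] at this
    exact hGne this.symm
  have hn1 : n ≠ 1 := by
    rintro rfl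
    have hder : HasDerivAt (fun z => (z - z₀) ^ 1 • G z)
        (1 * G z₀ + (z₀ - z₀) * deriv G z₀) z₀ := by
      simpa [smul_eq_mul, Pi.mul_def] using
        (((hasDerivAt_id z₀).sub_const z₀).mul hGan.differentiableAt.hasDerivAt)
    have h1 : deriv F z₀ = deriv Φ z₀ := deriv_sub_const _
    have h2 : deriv F z₀ = G z₀ := by
      rw [Filter.EventuallyEq.deriv_eq hGeq, hder.deriv]; simp
    rw [h1, hd] at h2
    exact hGne h2.symm
  have hn2 : 2 ≤ n := by omega
  -- build an n-th root of G near z₀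
  set c : ℂ := G z₀ with hc
  obtain ⟨w, hw⟩ := Complex.isAlgClosed.exists_pow_nat_eq c (by omega : 0 < n)
  have hwne : w ≠ 0 := by
    intro h; apply hGne; rw [← hw, h]; exact zero_pow hn0
  set ρ : ℂ → ℂ := fun z => w * Complex.exp (Complex.log (G z / c) / n) with hρdef
  have hslit : ∀ x : ℂ, x ∈ Metric.ball (1:ℂ) 1 → x ∈ Complex.slitPlane := by
    intro x hx
    rw [Complex.mem_slitPlane_iff]
    left
    have h1 : ‖x - 1‖ < 1 := by
      rw [Metric.mem_ball, Complex.dist_eq] at hx; exact hx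
    have h2 : |(x - 1).re| < 1 := lt_of_le_of_lt (Complex.abs_re_le_norm _) h1
    have h3 := abs_lt.mp h2
    simp only [Complex.sub_re, Complex.one_re] at h3
    linarith [h3.1]
  have hne0 : ∀ x : ℂ, x ∈ Metric.ball (1:ℂ) 1 → x ≠ 0 := by
    intro x hx h; rw [h] at hx; simp at hx
  have hev : ∀ᶠ z in 𝓝 z₀, AnalyticAt ℂ G z ∧ G z / c ∈ Metric.ball (1:ℂ) 1 := by
    have h1 : ∀ᶠ z in 𝓝 z₀, AnalyticAt ℂ G z := hGan.eventually_analyticAt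
    have h2 : ∀ᶠ z in 𝓝 z₀, G z / c ∈ Metric.ball (1:ℂ) 1 := by
      have hcont : ContinuousAt (fun z => G z / c) z₀ :=
        hGan.continuousAt.div_const c
      have he : G z₀ / c = 1 := by rw [← hc, div_self hGne]
      exact hcont.preimage_mem_nhds (isOpen_ball.mem_nhds (by simp [he]))
    exact h1.and h2
  obtain ⟨t, htp, htopen, htz⟩ := _root_.eventually_nhds_iff.mp hev
  set H : ℂ → ℂ := fun z => (z - z₀) * ρ z with hHdef
  have hρdiff : ∀ z ∈ t, DifferentiableAt ℂ ρ z := by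
    intro z hz
    obtain ⟨h1, h2⟩ := htp z hz
    have hdiv : DifferentiableAt ℂ (fun z => G z / c) z := h1.differentiableAt.div_const c
    have hlog : DifferentiableAt ℂ (fun z => Complex.log (G z / c)) z :=
      hdiv.clog (hslit _ h2)
    exact ((hlog.div_const (n:ℂ)).cexp).const_mul w
  have hHdiff : DifferentiableOn ℂ H t := fun z hz =>
    (((differentiableAt_id.sub_const z₀).mul (hρdiff z hz))).differentiableWithinAt
  have hHan : AnalyticAt ℂ H z₀ := (hHdiff.analyticOnNhd htopen) z₀ htz
  have hρz₀ : ρ z₀ = w := by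
    simp [hρdef, ← hc, div_self hGne, Complex.log_one]
  have hHder : HasDerivAt H (ρ z₀) z₀ := by
    have := ((hasDerivAt_id z₀).sub_const z₀).mul (hρdiff z₀ htz).hasDerivAt
    simpa [Pi.mul_def] using this
  have hstrict : HasStrictDerivAt H (ρ z₀) z₀ := by
    obtain ⟨p, hp⟩ := hHan
    have h1 := hp.hasStrictDerivAt
    have h2 := hp.hasDerivAt
    rw [hHder.unique h2]
    exact h1
  have hwρ : ρ z₀ ≠ 0 := by rw [hρz₀]; exact hwne
  have hmap : Filter.map H (𝓝 z₀) = 𝓝 0 := by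
    have := hstrict.map_nhds_eq hwρ
    rwa [show H z₀ = 0 by simp [hHdef]] at this
  -- eventually F = H ^ n on the ball
  have hFH : ∀ᶠ z in 𝓝 z₀, F z = H z ^ n ∧ z ∈ Metric.ball (0:ℂ) 1 := by
    filter_upwards [hGeq, hev, hball] with z h1 h2 h3
    obtain ⟨ha, hb⟩ := h2
    refine ⟨?_, h3⟩
    have hdivne : G z / c ≠ 0 := hne0 _ hb
    have hρn : ρ z ^ n = G z := by
      rw [hρdef]
      simp only
      rw [mul_pow, hw, ← Complex.exp_nat_mul,
        mul_div_cancel₀ _ (by exact_mod_cast hn0 : (n:ℂ) ≠ 0),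
        Complex.exp_log hdivne]
      field_simp
    rw [h1, hHdef]
    simp only [smul_eq_mul]
    rw [mul_pow, hρn]
  have hEmem : {z | F z = H z ^ n ∧ z ∈ Metric.ball (0:ℂ) 1} ∈ 𝓝 z₀ := hFH
  have himg : H '' {z | F z = H z ^ n ∧ z ∈ Metric.ball (0:ℂ) 1} ∈ 𝓝 (0:ℂ) := by
    rw [← hmap]; exact Filter.image_mem_map hEmem
  obtain ⟨ε, hε, hεsub⟩ := Metric.mem_nhds_iff.mp himg
  -- a primitive n-th root of unity
  have hprim := Complex.isPrimitiveRoot_exp n hn0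
  set ζ : ℂ := Complex.exp (2 * Real.pi * Complex.I / n) with hζdef
  have hζn : ζ ^ n = 1 := hprim.pow_eq_one
  have hζ1 : ζ ≠ 1 := hprim.ne_one (by omega)
  have hζabs : ‖ζ‖ = 1 := by
    have hrw : (2 * (Real.pi:ℂ) * Complex.I / (n:ℂ)) = ((2 * Real.pi / n : ℝ) : ℂ) * Complex.I := by
      push_cast
      ring
    rw [hζdef, hrw, Complex.norm_exp_ofReal_mul_I]
  set u : ℂ := ((ε/2 : ℝ) : ℂ) with hu
  have hu0 : u ≠ 0 := by
    simp only [hu, ne_eq, Complex.ofReal_eq_zero]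
    intro h; linarith
  have huball : u ∈ Metric.ball (0:ℂ) ε := by
    rw [Metric.mem_ball, Complex.dist_eq, sub_zero, hu, Complex.norm_real, Real.norm_eq_abs,
      abs_of_pos (by linarith)]
    linarith
  have hvball : ζ * u ∈ Metric.ball (0:ℂ) ε := by
    rw [Metric.mem_ball, Complex.dist_eq, sub_zero, norm_mul, hζabs, one_mul, hu,
      Complex.norm_real, Real.norm_eq_abs, abs_of_pos (by linarith)]
    linarith
  obtain ⟨z₁, hz₁S, hz₁⟩ := hεsub huball
  obtain ⟨z₂, hz₂S, hz₂⟩ := hεsub hvball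
  obtain ⟨hz₁F, hz₁b⟩ := hz₁S
  obtain ⟨hz₂F, hz₂b⟩ := hz₂S
  have hΦeq : Φ z₁ = Φ z₂ := by
    have hFF : F z₁ = F z₂ := by
      rw [hz₁F, hz₂F, hz₁, hz₂, mul_pow, hζn, one_mul]
    exact sub_left_inj.mp hFF
  have h12 : z₁ = z₂ := hΦinj hz₁b hz₂b hΦeq
  rw [h12, hz₂] at hz₁
  exact hζ1 (mul_right_cancel₀ hu0 (by rw [one_mul]; exact hz₁))

/-- a univalent map on the unit disk whose derivative extends continuously
to the closed disk with constant modulus on the unit circle is affine. -/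
theorem univalent_constant_modulus_derivative_is_affine
    (Φ : ℂ → ℂ)
    (hΦcont : ContinuousOn Φ (closure (Metric.ball (0 : ℂ) 1)))
    (hΦhol : DifferentiableOn ℂ Φ (Metric.ball (0 : ℂ) 1))
    (hΦinj : Set.InjOn Φ (Metric.ball (0 : ℂ) 1))
    (g : ℂ → ℂ) (hgcont : ContinuousOn g (closure (Metric.ball (0 : ℂ) 1)))
    (hg : ∀ z ∈ Metric.ball (0 : ℂ) 1, g z = deriv Φ z)
    (hconst : ∃ k : ℝ, ∀ z ∈ Metric.sphere (0 : ℂ) 1, ‖g z‖ = k) :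
    ∃ (a : ℂ) (δ θ : ℝ), 0 < δ ∧
      ∀ z ∈ closure (Metric.ball (0 : ℂ) 1),
        Φ z = a + (δ : ℂ) * Complex.exp (θ * Complex.I) * z := by
  obtain ⟨k, hk⟩ := hconst
  have hfr : frontier (Metric.ball (0:ℂ) 1) = Metric.sphere 0 1 :=
    frontier_ball 0 one_ne_zero
  have hcl : closure (Metric.ball (0:ℂ) 1) = Metric.closedBall 0 1 :=
    closure_ball 0 one_ne_zero
  have hΦan : AnalyticOnNhd ℂ Φ (Metric.ball (0:ℂ) 1) := hΦhol.analyticOnNhd isOpen_ball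
  have hderiv_diff : DifferentiableOn ℂ (deriv Φ) (Metric.ball (0:ℂ) 1) :=
    (hΦan.deriv).differentiableOn
  have hgdiff : DifferentiableOn ℂ g (Metric.ball (0:ℂ) 1) :=
    hderiv_diff.congr hg
  have hgdc : DiffContOnCl ℂ g (Metric.ball (0:ℂ) 1) := ⟨hgdiff, hgcont⟩
  -- upper bound from the maximum principle
  have hgle : ∀ z ∈ closure (Metric.ball (0:ℂ) 1), ‖g z‖ ≤ k := by
    intro z hz
    refine Complex.norm_le_of_forall_mem_frontier_norm_le isBounded_ball hgdc ?_ hz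
    intro w hw
    rw [hfr] at hw
    rw [hk w hw]
  -- k is positive
  have h0mem : (0:ℂ) ∈ Metric.ball (0:ℂ) 1 := by simp
  have hd0 : deriv Φ 0 ≠ 0 := deriv_ne_zero_of_injOn_aux18 hΦhol hΦinj h0mem
  have hk0 : 0 < k := by
    have h1 : ‖g 0‖ ≤ k := hgle 0 (subset_closure h0mem)
    have h2 : 0 < ‖g 0‖ := by
      rw [hg 0 h0mem]
      exact norm_pos_iff.mpr hd0
    linarith
  -- g does not vanish on the closed ball
  have hgne : ∀ z ∈ closure (Metric.ball (0:ℂ) 1), g z ≠ 0 := by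
    intro z hz
    rw [hcl, Metric.mem_closedBall, Complex.dist_eq, sub_zero] at hz
    rcases lt_or_eq_of_le hz with h | h
    · have hzb : z ∈ Metric.ball (0:ℂ) 1 := by
        rwa [Metric.mem_ball, Complex.dist_eq, sub_zero]
      rw [hg z hzb]
      exact deriv_ne_zero_of_injOn_aux18 hΦhol hΦinj hzb
    · have hzs : z ∈ Metric.sphere (0:ℂ) 1 := by
        rwa [Metric.mem_sphere, Complex.dist_eq, sub_zero]
      intro hzero
      have hzz := hk z hzs
      rw [hzero, norm_zero] at hzz
      linarith
  -- lower bound from the maximum principle applied to 1/g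
  have hGdc : DiffContOnCl ℂ (fun z => (g z)⁻¹) (Metric.ball (0:ℂ) 1) := by
    constructor
    · exact hgdiff.inv fun z hz => hgne z (subset_closure hz)
    · exact hgcont.inv₀ hgne
  have hgge : ∀ z ∈ closure (Metric.ball (0:ℂ) 1), ‖(g z)⁻¹‖ ≤ k⁻¹ := by
    intro z hz
    refine Complex.norm_le_of_forall_mem_frontier_norm_le isBounded_ball hGdc ?_ hz
    intro w hw
    rw [hfr] at hw
    rw [norm_inv, hk w hw]
  have hnorm : ∀ z ∈ Metric.ball (0:ℂ) 1, ‖deriv Φ z‖ = k := by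
    intro z hz
    have h1 : ‖g z‖ ≤ k := hgle z (subset_closure hz)
    have h2 : ‖(g z)⁻¹‖ ≤ k⁻¹ := hgge z (subset_closure hz)
    have h3 : g z ≠ 0 := hgne z (subset_closure hz)
    have h4 : 0 < ‖g z‖ := norm_pos_iff.mpr h3
    rw [norm_inv] at h2
    have h5 : k ≤ ‖g z‖ := by
      rw [inv_le_inv₀ h4 hk0] at h2
      exact h2
    rw [← hg z hz]
    linarith
  -- the derivative is constant on the ball
  obtain ⟨c, hc⟩ : ∃ c, deriv Φ 0 = c := ⟨_, rfl⟩
  have hcne : c ≠ 0 := hc ▸ hd0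
  have hconst' : ∀ z ∈ Metric.ball (0:ℂ) 1, deriv Φ z = c := by
    have hmax : IsMaxOn (norm ∘ deriv Φ) (Metric.ball (0:ℂ) 1) 0 := by
      intro z hz
      simp only [Set.mem_setOf_eq, Function.comp_apply]
      rw [hnorm z hz, hnorm 0 h0mem]
    have heq := Complex.eqOn_of_isPreconnected_of_isMaxOn_norm
      (convex_ball (0:ℂ) 1).isPreconnected isOpen_ball hderiv_diff h0mem hmax
    intro z hz
    rw [← hc]
    exact heq hz
  -- Φ is affine on the ball
  have haff : ∀ z ∈ Metric.ball (0:ℂ) 1, Φ z = Φ 0 + c * z := by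
    set Ψ : ℂ → ℂ := fun z => Φ z - c * z with hΨ
    have hΨdiff : DifferentiableOn ℂ Ψ (Metric.ball (0:ℂ) 1) :=
      hΦhol.sub ((differentiable_id.const_mul c).differentiableOn)
    have hΨder : ∀ z ∈ Metric.ball (0:ℂ) 1, fderivWithin ℂ Ψ (Metric.ball (0:ℂ) 1) z = 0 := by
      intro z hz
      have hΦd : HasDerivAt Φ c z := by
        have := (hΦan z hz).differentiableAt.hasDerivAt
        rwa [hconst' z hz] at this
      have hcd : HasDerivAt (fun z : ℂ => c * z) c z := by
        simpa using (hasDerivAt_id z).const_mul c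
      have hΨd : HasDerivAt Ψ 0 z := by
        have := hΦd.sub hcd
        rw [sub_self] at this
        exact this
      rw [fderivWithin_of_isOpen isOpen_ball hz, hΨd.hasFDerivAt.fderiv]
      ext
      simp
    intro z hz
    have := (convex_ball (0:ℂ) 1).is_const_of_fderivWithin_eq_zero hΨdiff hΨder hz h0mem
    simp only [hΨ] at this
    have h0 : Φ z - c * z = Φ 0 - c * 0 := this
    rw [mul_zero, sub_zero] at h0
    linear_combination h0
  -- extend to the closure by continuity
  have hext : ∀ z ∈ closure (Metric.ball (0:ℂ) 1), Φ z = Φ 0 + c * z := by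
    intro z hz
    have hne : (𝓝[Metric.ball (0:ℂ) 1] z).NeBot := mem_closure_iff_nhdsWithin_neBot.mp hz
    have t1 : Filter.Tendsto Φ (𝓝[Metric.ball (0:ℂ) 1] z) (𝓝 (Φ z)) :=
      (hΦcont z hz).mono subset_closure
    have t2 : Filter.Tendsto (fun w => Φ 0 + c * w) (𝓝[Metric.ball (0:ℂ) 1] z)
        (𝓝 (Φ 0 + c * z)) :=
      ((continuous_const.add (continuous_const.mul continuous_id)).tendsto z).mono_left
        nhdsWithin_le_nhds
    have t1' : Filter.Tendsto (fun w => Φ 0 + c * w) (𝓝[Metric.ball (0:ℂ) 1] z)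
        (𝓝 (Φ z)) := by
      refine t1.congr' ?_
      filter_upwards [self_mem_nhdsWithin] with w hw
      exact haff w hw
    exact tendsto_nhds_unique t1' t2
  refine ⟨Φ 0, ‖c‖, Complex.arg c, ?_, ?_⟩
  · exact norm_pos_iff.mpr hcne
  · intro z hz
    rw [hext z hz, Complex.norm_mul_exp_arg_mul_I c]
end
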